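/- arXiv:1511.07715 — 4 statements merged into one kernel-verified Lean document; each statement's English description precedes it below -/
import Mathlib

section
/- Let O be a finite set, w a real-valued weight on the edges of K_O, and g : ℝ → ℝ a strictly increasing function. Then a spanning tree T is a minimum spanning tree of w if and only if T is a minimum spanning tree of the weight g ∘ w. -/
open SimpleGraph Finset

variable {V : Type*} [Fintype V] [DecidableEq V]

/-- Total weight of (the edge set of) a simple graph `T` under edge weights `w`. -/
noncomputable def totalWeight (w : Sym2 V → ℝ) (T : SimpleGraph V) : ℝ :=
  ∑ e ∈ (Set.toFinite T.edgeSet).toFinset, w e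

/-- `T` is a minimum spanning tree of the complete graph on `V` with weights `w`. -/
def IsMST (w : Sym2 V → ℝ) (T : SimpleGraph V) : Prop :=
  T.IsTree ∧ ∀ T' : SimpleGraph V, T'.IsTree → totalWeight w T ≤ totalWeight w T'

/-- A weight on the complete graph: nonnegative, vanishing on the diagonal. -/
def IsWeight (d : Sym2 V → ℝ) : Prop :=
  (∀ e, 0 ≤ d e) ∧ ∀ x : V, d s(x, x) = 0

/-- An ultra-metric, encoded as a function on unordered pairs. -/
def IsUltrametric (u : Sym2 V → ℝ) : Prop :=
  IsWeight u ∧ ∀ x y z : V, u s(x, z) ≤ max (u s(x, y)) (u s(y, z))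

/-- A (pseudo-)metric, encoded as a function on unordered pairs. -/
def IsMetric (d : Sym2 V → ℝ) : Prop :=
  IsWeight d ∧ ∀ x y z : V, d s(x, z) ≤ d s(x, y) + d s(y, z)

/-- The single linkage ultra-metric of a weight `d`. -/
noncomputable def SL (d : Sym2 V → ℝ) (e : Sym2 V) : ℝ :=
  sSup {r | ∃ u : Sym2 V → ℝ, IsUltrametric u ∧ u ≤ d ∧ u e = r}

/-- Maximum weight of an edge along a walk (0 for the empty walk). -/
noncomputable def pathMax (w : Sym2 V → ℝ) {T : SimpleGraph V} {x y : V}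
    (p : T.Walk x y) : ℝ :=
  (p.edges.map w).foldr max 0

/-- Sum of weights of the edges along a walk. -/
noncomputable def pathSum (w : Sym2 V → ℝ) {T : SimpleGraph V} {x y : V}
    (p : T.Walk x y) : ℝ :=
  (p.edges.map w).sum

/-- `alpha T hT w x y`: max weight of an edge on the unique path in the tree `T` from `x` to `y`. -/
noncomputable def alpha (T : SimpleGraph V) (hT : T.IsTree) (w : Sym2 V → ℝ)
    (x y : V) : ℝ :=
  pathMax w (hT.existsUnique_path x y).exists.choose

/-- `omega T hT w x y`: the tree metric, the sum of weights along the unique path in `T`. -/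
noncomputable def treeOmega (T : SimpleGraph V) (hT : T.IsTree) (w : Sym2 V → ℝ)
    (x y : V) : ℝ :=
  pathSum w (hT.existsUnique_path x y).exists.choose

/-- Ultra-metric as a two-variable function. -/
def IsUltrametricFn (u : V → V → ℝ) : Prop :=
  (∀ x y, 0 ≤ u x y) ∧ (∀ x, u x x = 0) ∧ (∀ x y, u x y = u y x) ∧
    ∀ x y z, u x z ≤ max (u x y) (u y z)

namespace MSTAux

noncomputable def ES (G : SimpleGraph V) : Finset (Sym2 V) :=
  (Set.toFinite G.edgeSet).toFinset

@[simp] lemma mem_ES {G : SimpleGraph V} {e : Sym2 V} : e ∈ ES G ↔ e ∈ G.edgeSet :=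
  Set.Finite.mem_toFinset _

lemma totalWeight_eq (w : Sym2 V → ℝ) (T : SimpleGraph V) :
    totalWeight w T = ∑ e ∈ ES T, w e := rfl

lemma ES_card_tree {T : SimpleGraph V} (hT : T.IsTree) :
    (ES T).card = Fintype.card V - 1 := by
  classical
  have : Fintype T.edgeSet := (Set.toFinite T.edgeSet).fintype
  have h := hT.card_edgeFinset
  have hES : ES T = T.edgeFinset := by
    ext e; simp [mem_edgeFinset]
  rw [hES]; omega

lemma ES_inj {G H : SimpleGraph V} (h : ES G = ES H) : G = H := by
  rw [← edgeSet_inj]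
  ext e
  constructor <;> intro he
  · exact mem_ES.mp (h ▸ mem_ES.mpr he)
  · exact mem_ES.mp (h ▸ mem_ES.mpr he)

lemma reach_endpoint_aux {G : SimpleGraph V} {x y : V} :
    ∀ {v u : V} (_ : G.Walk v u), u = x →
      (G.deleteEdges {s(x,y)}).Reachable v x ∨ (G.deleteEdges {s(x,y)}).Reachable v y := by
  intro v u p
  induction p with
  | nil => rintro rfl; exact Or.inl (Reachable.refl _)
  | @cons a c _ h q ih =>
    intro hu
    by_cases he : s(a, c) = s(x, y)
    · rcases Sym2.eq_iff.mp he with ⟨rfl, rfl⟩ | ⟨rfl, rfl⟩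
      · exact Or.inl (Reachable.refl _)
      · exact Or.inr (Reachable.refl _)
    · have hadj : (G.deleteEdges {s(x,y)}).Adj a c := by
        rw [deleteEdges_adj]
        exact ⟨h, by simpa using he⟩
      exact Or.imp (fun r => hadj.reachable.trans r) (fun r => hadj.reachable.trans r) (ih hu)

lemma reach_endpoint {G : SimpleGraph V} {x y v : V} (p : G.Walk v x) :
    (G.deleteEdges {s(x,y)}).Reachable v x ∨ (G.deleteEdges {s(x,y)}).Reachable v y :=
  reach_endpoint_aux p rfl

lemma reachable_delete_of_reachable {G : SimpleGraph V} {x y : V}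
    (hxy : (G.deleteEdges {s(x,y)}).Reachable x y) {u v : V} (h : G.Reachable u v) :
    (G.deleteEdges {s(x,y)}).Reachable u v := by
  obtain ⟨p⟩ := h
  induction p with
  | nil => exact Reachable.refl _
  | @cons a c _ h q ih =>
    by_cases he : s(a, c) = s(x, y)
    · rcases Sym2.eq_iff.mp he with ⟨rfl, rfl⟩ | ⟨rfl, rfl⟩
      · exact hxy.trans ih
      · exact hxy.symm.trans ih
    · have hadj : (G.deleteEdges {s(x,y)}).Adj a c := by
        rw [deleteEdges_adj]
        exact ⟨h, by simpa using he⟩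
      exact hadj.reachable.trans ih

lemma exists_tree_le :
    ∀ (n : ℕ) (G : SimpleGraph V), (ES G).card = n → G.Connected →
      ∃ T, T ≤ G ∧ T.IsTree := by
  intro n
  induction n using Nat.strong_induction_on with
  | _ n ih =>
    intro G hn hG
    by_cases hac : G.IsAcyclic
    · exact ⟨G, le_rfl, ⟨hG, hac⟩⟩
    · rw [IsAcyclic] at hac
      push_neg at hac
      obtain ⟨v, c, hc⟩ := hac
      cases c with
      | nil => exact absurd rfl hc.ne_nil
      | @cons _ b _ h q =>
        have hmem : s(v, b) ∈ (Walk.cons h q).edges := by simp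
        have key := (adj_and_reachable_delete_edges_iff_exists_cycle (G := G)).mpr
          ⟨v, _, hc, hmem⟩
        have hkey : (G.deleteEdges {s(v,b)}).Reachable v b := key.2
        have hG' : (G.deleteEdges {s(v,b)}).Connected := by
          rw [connected_iff]
          exact ⟨fun p q => reachable_delete_of_reachable hkey (hG p q), hG.nonempty⟩
        have hES : ES (G.deleteEdges {s(v,b)}) = (ES G).erase s(v,b) := by
          ext e
          simp [ES, edgeSet_deleteEdges, Finset.mem_erase, and_comm]
        have hlt : (ES (G.deleteEdges {s(v,b)})).card < n := by
          rw [hES, ← hn]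
          exact Finset.card_erase_lt_of_mem (mem_ES.mpr key.1)
        obtain ⟨T, hT1, hT2⟩ := ih _ hlt _ rfl hG'
        exact ⟨T, hT1.trans (deleteEdges_le _), hT2⟩

lemma isTree_of_connected_card {G : SimpleGraph V} (hG : G.Connected)
    (hcard : (ES G).card = Fintype.card V - 1) : G.IsTree := by
  obtain ⟨T, hle, hT⟩ := exists_tree_le _ G rfl hG
  have hsub : ES T ⊆ ES G := fun e he => mem_ES.mpr (edgeSet_mono hle (mem_ES.mp he))
  have hTc := ES_card_tree hT
  have heq : ES T = ES G := Finset.eq_of_subset_of_card_le hsub (by rw [hcard, hTc])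
  rwa [ES_inj heq] at hT

lemma walk_split {G : SimpleGraph V} {x y : V} (p : G.Walk x y) (d : G.Dart)
    (hd : d ∈ p.darts) (hnd : p.edges.Nodup) :
    (∃ q : G.Walk x d.fst, d.edge ∉ q.edges) ∧ ∃ r : G.Walk d.snd y, d.edge ∉ r.edges := by
  induction p with
  | nil => simp at hd
  | @cons a c _ h q ih =>
    rw [Walk.darts_cons, List.mem_cons] at hd
    rw [Walk.edges_cons, List.nodup_cons] at hnd
    rcases hd with rfl | hd
    · exact ⟨⟨Walk.nil, by simp⟩, ⟨q, hnd.1⟩⟩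
    · obtain ⟨⟨q1, hq1⟩, ⟨r1, hr1⟩⟩ := ih hd hnd.2
      have hde : d.edge ∈ q.edges := List.mem_map_of_mem (f := Dart.edge) hd
      have hne : d.edge ≠ s(a, c) := fun hh => hnd.1 (hh ▸ hde)
      exact ⟨⟨Walk.cons h q1, by simp [hq1, hne]⟩, ⟨r1, hr1⟩⟩

lemma surgery {T : SimpleGraph V} (hT : T.IsTree) {x y a b : V}
    (he : s(x,y) ∈ T.edgeSet) (hf : s(a,b) ∉ T.edgeSet)
    (hreach : ¬ (T.deleteEdges {s(x,y)}).Reachable a b) :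
    (T.deleteEdges {s(x,y)} ⊔ fromEdgeSet {s(a,b)}).IsTree ∧
      ES (T.deleteEdges {s(x,y)} ⊔ fromEdgeSet {s(a,b)})
        = insert s(a,b) ((ES T).erase s(x,y)) := by
  have hab : a ≠ b := by rintro rfl; exact hreach (Reachable.refl _)
  set T2 := T.deleteEdges {s(x,y)} ⊔ fromEdgeSet {s(a,b)} with hT2
  have hfe : s(a,b) ≠ s(x,y) := fun hh => hf (hh ▸ he)
  have hES : ES T2 = insert s(a,b) ((ES T).erase s(x,y)) := by
    ext e
    simp only [mem_ES, hT2, edgeSet_sup, edgeSet_deleteEdges, edgeSet_fromEdgeSet,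
      Set.mem_union, Set.mem_diff, Set.mem_singleton_iff, Finset.mem_insert,
      Finset.mem_erase, mem_ES, Set.mem_setOf_eq]
    constructor
    · rintro (⟨h1, h2⟩ | ⟨h1, _⟩)
      · exact Or.inr ⟨h2, h1⟩
      · exact Or.inl h1
    · rintro (rfl | ⟨h1, h2⟩)
      · exact Or.inr ⟨rfl, by simpa [Sym2.mk_isDiag_iff] using hab⟩
      · exact Or.inl ⟨h2, h1⟩
  have hxyES : s(x,y) ∈ ES T := mem_ES.mpr he
  have hcard : (ES T2).card = Fintype.card V - 1 := by
    rw [hES, Finset.card_insert_of_notMem (by simp [hf, hfe]),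
      Finset.card_erase_of_mem hxyES, ES_card_tree hT]
    have : 0 < (ES T).card := Finset.card_pos.mpr ⟨_, hxyES⟩
    rw [ES_card_tree hT] at this
    omega
  have hle : T.deleteEdges {s(x,y)} ≤ T2 := le_sup_left
  have hadjab : T2.Adj a b := by
    rw [hT2, sup_adj, fromEdgeSet_adj]
    exact Or.inr ⟨rfl, hab⟩
  have key : ∀ v, (T.deleteEdges {s(x,y)}).Reachable v x ∨
      (T.deleteEdges {s(x,y)}).Reachable v y :=
    fun v => reach_endpoint (hT.isConnected v x).some
  have hxy2 : T2.Reachable x y := by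
    rcases key a with ha | ha <;> rcases key b with hb | hb
    · exact absurd (ha.trans hb.symm) hreach
    · exact ((ha.mono hle).symm.trans (hadjab.reachable.trans (hb.mono hle)))
    · exact ((hb.mono hle).symm.trans (hadjab.symm.reachable.trans (ha.mono hle)))
    · exact absurd (ha.trans hb.symm) hreach
  have hreachx : ∀ v, T2.Reachable v x := by
    intro v
    rcases key v with hv | hv
    · exact hv.mono hle
    · exact (hv.mono hle).trans hxy2.symm
  have hconn : T2.Connected := by
    rw [connected_iff]
    exact ⟨fun u v => (hreachx u).trans (hreachx v).symm, hT.isConnected.nonempty⟩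
  exact ⟨isTree_of_connected_card hconn hcard, hES⟩

lemma exists_mst (hV : 2 ≤ Fintype.card V) (w : Sym2 V → ℝ) : ∃ T, IsMST w T := by
  have hne : Nonempty V := Fintype.card_pos_iff.mp (by omega)
  have htop : (⊤ : SimpleGraph V).Connected := by
    rw [connected_iff]
    refine ⟨fun u v => ?_, hne⟩
    by_cases h : u = v
    · exact h ▸ Reachable.refl _
    · exact (Adj.reachable (by simp [h]))
  obtain ⟨T0, _, hT0⟩ := exists_tree_le _ ⊤ rfl htop
  obtain ⟨T, hTmem, hmin⟩ := Set.exists_min_image {T : SimpleGraph V | T.IsTree}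
    (totalWeight w) (Set.toFinite _) ⟨T0, hT0⟩
  exact ⟨T, hTmem, fun S hS => hmin S hS⟩

end MSTAux

namespace MSTAux

set_option maxHeartbeats 1000000 in
lemma exchange (w : Sym2 V → ℝ) (g : ℝ → ℝ) (hg : StrictMono g) :
    ∀ (n : ℕ) (T T' : SimpleGraph V), (ES T \ ES T').card = n →
      IsMST w T → IsMST (g ∘ w) T' → IsMST (g ∘ w) T ∧ IsMST w T' := by
  intro n
  induction n using Nat.strong_induction_on with
  | _ n ih =>
    intro T T' hn hT hT'
    rcases Nat.eq_zero_or_pos n with rfl | hpos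
    · have hsub : ES T ⊆ ES T' := by
        rwa [Finset.card_eq_zero, Finset.sdiff_eq_empty_iff_subset] at hn
      have heq : ES T = ES T' := Finset.eq_of_subset_of_card_le hsub
        (by rw [ES_card_tree hT.1, ES_card_tree hT'.1])
      have hTT : T = T' := ES_inj heq
      subst hTT
      exact ⟨hT', hT⟩
    · obtain ⟨e, he⟩ := Finset.card_pos.mp (hn ▸ hpos)
      rw [Finset.mem_sdiff] at he
      obtain ⟨heT, heT'⟩ := he
      obtain ⟨x, y, rfl⟩ : ∃ x y, e = s(x, y) := Sym2.inductionOn e fun x y => ⟨x, y, rfl⟩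
      have hxyT : s(x,y) ∈ T.edgeSet := mem_ES.mp heT
      have hxyT' : s(x,y) ∉ T'.edgeSet := fun h => heT' (mem_ES.mpr h)
      have hadjT : T.Adj x y := hxyT
      -- the tree edge is a bridge
      have hbr : ¬ (T.deleteEdges {s(x,y)}).Reachable x y :=
        (isAcyclic_iff_forall_adj_isBridge.mp hT.1.IsAcyclic hadjT)
      -- a path in T' from x to y
      obtain ⟨p, hp⟩ : ∃ p : T'.Walk x y, p.IsPath :=
        ⟨(hT'.1.isConnected x y).some.toPath.1, (hT'.1.isConnected x y).some.toPath.2⟩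
      -- boundary dart
      obtain ⟨d, hdp, hdS, hdnS⟩ := p.exists_boundary_dart
        {v | (T.deleteEdges {s(x,y)}).Reachable x v} (Reachable.refl _) hbr
      have hdedge : d.edge = s(d.fst, d.snd) := rfl
      have hfT' : s(d.fst, d.snd) ∈ T'.edgeSet := by
        rw [← hdedge]
        exact p.edges_subset_edgeSet (List.mem_map_of_mem (f := Dart.edge) hdp)
      have hfe : s(d.fst, d.snd) ≠ s(x,y) := fun h => hxyT' (h ▸ hfT')
      have hreach_ab : ¬ (T.deleteEdges {s(x,y)}).Reachable d.fst d.snd :=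
        fun h => hdnS (hdS.trans h)
      have hfT : s(d.fst, d.snd) ∉ T.edgeSet := by
        intro h
        have hadj : (T.deleteEdges {s(x,y)}).Adj d.fst d.snd := by
          rw [deleteEdges_adj]
          exact ⟨h, by simpa using hfe⟩
        exact hreach_ab hadj.reachable
      -- surgery 1 : T - e + f, compare with T under w
      obtain ⟨hT2tree, hT2ES⟩ := surgery hT.1 hxyT hfT hreach_ab
      have hfeES : s(d.fst, d.snd) ∉ ES T := fun h => hfT (mem_ES.mp h)
      have hw1 : w s(x,y) ≤ w s(d.fst, d.snd) := by
        have h2 := hT.2 _ hT2tree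
        rw [totalWeight_eq, totalWeight_eq, hT2ES,
          Finset.sum_insert (by simp [hfeES, Finset.mem_erase]),
          Finset.sum_erase_eq_sub heT] at h2
        linarith
      -- surgery 2 : T' - f + e, compare with T' under g ∘ w
      have hbrf : ¬ (T'.deleteEdges {s(d.fst, d.snd)}).Reachable d.fst d.snd :=
        (isAcyclic_iff_forall_adj_isBridge.mp hT'.1.IsAcyclic hfT')
      obtain ⟨⟨q1, hq1⟩, ⟨r1, hr1⟩⟩ := walk_split p d hdp hp.edges_nodup
      have hreach_xy' : ¬ (T'.deleteEdges {s(d.fst, d.snd)}).Reachable x y := by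
        intro h
        have h1 : (T'.deleteEdges {s(d.fst, d.snd)}).Reachable x d.fst := by
          refine ⟨q1.toDeleteEdges _ ?_⟩
          intro e' he' hmem
          rw [Set.mem_singleton_iff] at hmem
          exact hq1 (by rwa [hdedge, ← hmem])
        have h2 : (T'.deleteEdges {s(d.fst, d.snd)}).Reachable d.snd y := by
          refine ⟨r1.toDeleteEdges _ ?_⟩
          intro e' he' hmem
          rw [Set.mem_singleton_iff] at hmem
          exact hr1 (by rwa [hdedge, ← hmem])
        exact hbrf (h1.symm.trans (h.trans h2.symm))
      obtain ⟨hT3tree, hT3ES⟩ := surgery hT'.1 hfT' hxyT' hreach_xy'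
      have hfT'ES : s(d.fst, d.snd) ∈ ES T' := mem_ES.mpr hfT'
      have hsum3 : ∀ u : Sym2 V → ℝ,
          (∑ e' ∈ ES (T'.deleteEdges {s(d.fst, d.snd)} ⊔ fromEdgeSet {s(x,y)}), u e')
            = u s(x,y) + ((∑ e' ∈ ES T', u e') - u s(d.fst, d.snd)) := by
        intro u
        rw [hT3ES, Finset.sum_insert (by simp [heT', Finset.mem_erase]),
          Finset.sum_erase_eq_sub hfT'ES]
      have hw2 : w s(d.fst, d.snd) ≤ w s(x,y) := by
        have h2 := hT'.2 _ hT3tree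
        rw [totalWeight_eq, totalWeight_eq, hsum3] at h2
        simp only [Function.comp_apply] at h2
        exact hg.le_iff_le.mp (by linarith)
      have hww : w s(d.fst, d.snd) = w s(x,y) := le_antisymm hw2 hw1
      -- T3 is also an MST for g ∘ w
      have hT3mst : IsMST (g ∘ w) (T'.deleteEdges {s(d.fst, d.snd)} ⊔ fromEdgeSet {s(x,y)}) := by
        refine ⟨hT3tree, fun S hS => ?_⟩
        have h1 := hT'.2 S hS
        have heqw : totalWeight (g ∘ w) (T'.deleteEdges {s(d.fst, d.snd)} ⊔ fromEdgeSet {s(x,y)})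
            = totalWeight (g ∘ w) T' := by
          rw [totalWeight_eq, totalWeight_eq, hsum3]
          simp [hww]
        rw [heqw]
        exact h1
      -- the measure decreases
      have hmeas : ES T \ ES (T'.deleteEdges {s(d.fst, d.snd)} ⊔ fromEdgeSet {s(x,y)})
          = (ES T \ ES T').erase s(x,y) := by
        rw [hT3ES]
        ext e'
        simp only [Finset.mem_sdiff, Finset.mem_insert, Finset.mem_erase, not_or, not_and]
        constructor
        · rintro ⟨h1, h2, h3⟩
          refine ⟨h2, h1, fun h4 => ?_⟩
          by_cases h5 : e' = s(d.fst, d.snd)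
          · exact hfeES (h5 ▸ h1)
          · exact (h3 h5) h4
        · rintro ⟨h1, h2, h3⟩
          exact ⟨h2, h1, fun _ => h3⟩
      have hlt : (ES T \ ES (T'.deleteEdges {s(d.fst, d.snd)} ⊔ fromEdgeSet {s(x,y)})).card < n := by
        rw [hmeas, ← hn]
        exact Finset.card_erase_lt_of_mem (Finset.mem_sdiff.mpr ⟨heT, heT'⟩)
      obtain ⟨hTg, hT3w⟩ := ih _ hlt T _ rfl hT hT3mst
      refine ⟨hTg, hT'.1, fun S hS => ?_⟩
      have h3 := hT3w.2 S hS
      have heqw : totalWeight w (T'.deleteEdges {s(d.fst, d.snd)} ⊔ fromEdgeSet {s(x,y)})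
          = totalWeight w T' := by
        rw [totalWeight_eq, totalWeight_eq, hsum3]
        rw [hww]; ring
      rw [heqw] at h3
      exact h3

end MSTAux

/-- MSTs are invariant under strictly increasing transformations of weights. -/
theorem mst_invariance_strictMono (hV : 2 ≤ Fintype.card V) (w : Sym2 V → ℝ)
    (g : ℝ → ℝ) (hg : StrictMono g) (T : SimpleGraph V) :
    IsMST w T ↔ IsMST (g ∘ w) T := by
  constructor
  · intro h
    obtain ⟨T', hT'⟩ := MSTAux.exists_mst hV (g ∘ w)
    exact (MSTAux.exchange w g hg _ T T' rfl h hT').1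
  · intro h
    obtain ⟨T0, hT0⟩ := MSTAux.exists_mst hV w
    exact (MSTAux.exchange w g hg _ T0 T rfl hT0 h).2
end

section
/- Let O be a finite set. The single linkage operator SL is the unique operator E from the set of metrics on O to itself whose image is exactly the set of ultra-metrics on O and which satisfies: (a) E(E(d)) = E(d), (b) E(d) ≤ d pointwise, and (c) d ≤ d' pointwise implies E(d) ≤ E(d') pointwise, for all metrics d, d'. -/
open SimpleGraph Finset

variable {V : Type*} [Fintype V] [DecidableEq V]

lemma zero_isUltrametric : IsUltrametric (fun _ : Sym2 V => (0:ℝ)) :=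
  ⟨⟨fun _ => le_refl 0, fun _ => rfl⟩, fun _ _ _ => by simp⟩

lemma ultra_isMetric {u : Sym2 V → ℝ} (hu : IsUltrametric u) : IsMetric u := by
  refine ⟨hu.1, fun x y z => (hu.2 x y z).trans ?_⟩
  rcases max_cases (u s(x,y)) (u s(y,z)) with ⟨h, _⟩ | ⟨h, _⟩ <;> rw [h] <;> nlinarith [hu.1.1 s(x,y), hu.1.1 s(y,z)]

lemma SL_set_bdd (d : Sym2 V → ℝ) (e : Sym2 V) :
    BddAbove {r | ∃ u : Sym2 V → ℝ, IsUltrametric u ∧ u ≤ d ∧ u e = r} := by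
  refine ⟨d e, fun r hr => ?_⟩
  obtain ⟨u, _, hle, he⟩ := hr
  exact he ▸ hle e

lemma ultra_le_SL {d u : Sym2 V → ℝ} (hu : IsUltrametric u) (hle : u ≤ d) : u ≤ SL d :=
  fun e => le_csSup (SL_set_bdd d e) ⟨u, hu, hle, rfl⟩

lemma SL_le_self {d : Sym2 V → ℝ} (hd : IsMetric d) : SL d ≤ d := by
  intro e
  refine Real.sSup_le (fun r hr => ?_) (hd.1.1 e)
  obtain ⟨u, _, hle, he⟩ := hr
  exact he ▸ hle e

lemma SL_nonneg {d : Sym2 V → ℝ} (hd : IsMetric d) (e : Sym2 V) : 0 ≤ SL d e :=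
  ultra_le_SL zero_isUltrametric (fun e => hd.1.1 e) e

lemma SL_isUltrametric {d : Sym2 V → ℝ} (hd : IsMetric d) : IsUltrametric (SL d) := by
  refine ⟨⟨SL_nonneg hd, fun x => le_antisymm ?_ (SL_nonneg hd _)⟩, fun x y z => ?_⟩
  · refine Real.sSup_le (fun r hr => ?_) le_rfl
    obtain ⟨u, hu, _, he⟩ := hr
    exact he ▸ (hu.1.2 x).le
  · refine Real.sSup_le (fun r hr => ?_)
      (le_max_of_le_left (SL_nonneg hd _))
    obtain ⟨u, hu, hle, he⟩ := hr
    subst he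
    exact (hu.2 x y z).trans
      (max_le_max (ultra_le_SL hu hle _) (ultra_le_SL hu hle _))

lemma SL_fix {u : Sym2 V → ℝ} (hu : IsUltrametric u) : SL u = u :=
  le_antisymm (SL_le_self (ultra_isMetric hu)) (ultra_le_SL hu le_rfl)

/-- SL is the unique operator on metrics with image the ultra-metrics
satisfying idempotence, `E d ≤ d`, and monotonicity. -/
theorem SL_unique_characterization :
    ((∀ d : Sym2 V → ℝ, IsMetric d → IsUltrametric (SL d)) ∧
      (∀ u : Sym2 V → ℝ, IsUltrametric u → ∃ d : Sym2 V → ℝ, IsMetric d ∧ SL d = u) ∧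
      (∀ d : Sym2 V → ℝ, IsMetric d → SL (SL d) = SL d) ∧
      (∀ d : Sym2 V → ℝ, IsMetric d → SL d ≤ d) ∧
      (∀ d d' : Sym2 V → ℝ, IsMetric d → IsMetric d' → d ≤ d' → SL d ≤ SL d')) ∧
    ∀ E : (Sym2 V → ℝ) → (Sym2 V → ℝ),
      (∀ d : Sym2 V → ℝ, IsMetric d → IsUltrametric (E d)) →
      (∀ u : Sym2 V → ℝ, IsUltrametric u → ∃ d : Sym2 V → ℝ, IsMetric d ∧ E d = u) →
      (∀ d : Sym2 V → ℝ, IsMetric d → E (E d) = E d) →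
      (∀ d : Sym2 V → ℝ, IsMetric d → E d ≤ d) →
      (∀ d d' : Sym2 V → ℝ, IsMetric d → IsMetric d' → d ≤ d' → E d ≤ E d') →
      ∀ d : Sym2 V → ℝ, IsMetric d → E d = SL d := by
  constructor
  · refine ⟨fun d hd => SL_isUltrametric hd, fun u hu => ⟨u, ultra_isMetric hu, SL_fix hu⟩,
      fun d hd => SL_fix (SL_isUltrametric hd), fun d hd => SL_le_self hd, ?_⟩
    intro d d' hd hd' hle e
    refine Real.sSup_le (fun r hr => ?_) (SL_nonneg hd' e)
    obtain ⟨u, hu, hule, he⟩ := hr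
    exact he ▸ ultra_le_SL hu (hule.trans hle) e
  · intro E h1 h2 h3 h4 h5 d hd
    have hfix : ∀ u : Sym2 V → ℝ, IsUltrametric u → E u = u := by
      intro u hu
      obtain ⟨d', hd', hEd'⟩ := h2 u hu
      rw [← hEd', h3 d' hd']
    refine le_antisymm (ultra_le_SL (h1 d hd) (h4 d hd)) ?_
    intro e
    refine Real.sSup_le (fun r hr => ?_) ((h1 d hd).1.1 e)
    obtain ⟨u, hu, hule, he⟩ := hr
    subst he
    calc u e = E u e := (congrFun (hfix u hu) e).symm
    _ ≤ E d e := h5 u d (ultra_isMetric hu) hd hule e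
end

section
/- For a finite set O, a spanning tree T of K_O, and a weight w on K_O, the following are equivalent: (1) T is a minimum spanning tree of w; (2) w(x,y) ≥ α(T, w|_T)(x,y) for all x, y ∈ O, where α(T, w|_T)(x,y) is the maximum w-weight of an edge on the path in T from x to y. -/
open SimpleGraph Finset

variable {V : Type*} [Fintype V] [DecidableEq V]

section Helpers
set_option linter.unusedSectionVars false


/-- shorthand: the edge finset of an arbitrary graph on a finite vertex set. -/
noncomputable def EF (G : SimpleGraph V) : Finset (Sym2 V) :=
  (Set.toFinite G.edgeSet).toFinset

@[simp] lemma mem_EF {G : SimpleGraph V} {e : Sym2 V} : e ∈ EF G ↔ e ∈ G.edgeSet :=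
  Set.Finite.mem_toFinset _

lemma totalWeight_eq (w : Sym2 V → ℝ) (G : SimpleGraph V) :
    (∑ e ∈ (Set.toFinite G.edgeSet).toFinset, w e) = ∑ e ∈ EF G, w e := rfl

/-- every element of a list is at most `foldr max 0`. -/
lemma le_foldr_max {l : List ℝ} {a : ℝ} (h : a ∈ l) : a ≤ l.foldr max 0 := by
  induction l with
  | nil => simp at h
  | cons b l ih =>
    rcases List.mem_cons.mp h with rfl | h
    · exact le_max_left _ _
    · exact (ih h).trans (le_max_right _ _)

lemma foldr_max_le {l : List ℝ} {c : ℝ} (h0 : 0 ≤ c) (h : ∀ a ∈ l, a ≤ c) :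
    l.foldr max 0 ≤ c := by
  induction l with
  | nil => simpa using h0
  | cons b l ih =>
    exact max_le (h b List.mem_cons_self) (ih fun a ha => h a (List.mem_cons_of_mem _ ha))

/-- walk decomposition w.r.t. a deleted edge. -/
lemma reach_of_walk {G : SimpleGraph V} {a b : V} :
    ∀ {u v : V}, G.Walk u v →
      (G.deleteEdges {s(a,b)}).Reachable u v ∨
      ((G.deleteEdges {s(a,b)}).Reachable u a ∧ (G.deleteEdges {s(a,b)}).Reachable b v) ∨
      ((G.deleteEdges {s(a,b)}).Reachable u b ∧ (G.deleteEdges {s(a,b)}).Reachable a v) := by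
  intro u v p
  induction p with
  | nil => exact Or.inl (Reachable.refl _)
  | @cons u u' v h q ih =>
    by_cases hc : s(u, u') = s(a, b)
    · rcases Sym2.eq_iff.mp hc with ⟨rfl, rfl⟩ | ⟨rfl, rfl⟩
      · rcases ih with h1 | ⟨h1, h2⟩ | ⟨h1, h2⟩
        · exact Or.inr (Or.inl ⟨Reachable.refl _, h1⟩)
        · exact Or.inr (Or.inl ⟨Reachable.refl _, h2⟩)
        · exact Or.inl h2
      · rcases ih with h1 | ⟨h1, h2⟩ | ⟨h1, h2⟩
        · exact Or.inr (Or.inr ⟨Reachable.refl _, h1⟩)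
        · exact Or.inl h2
        · exact Or.inr (Or.inr ⟨Reachable.refl _, h2⟩)
    · have hadj : (G.deleteEdges {s(a,b)}).Adj u u' := by
        rw [deleteEdges_adj]
        exact ⟨h, by simpa using hc⟩
      rcases ih with h1 | ⟨h1, h2⟩ | ⟨h1, h2⟩
      · exact Or.inl (hadj.reachable.trans h1)
      · exact Or.inr (Or.inl ⟨hadj.reachable.trans h1, h2⟩)
      · exact Or.inr (Or.inr ⟨hadj.reachable.trans h1, h2⟩)

/-- in an acyclic graph, removing an edge disconnects its ends. -/
lemma tree_bridge {T : SimpleGraph V} (hT : T.IsAcyclic) {x y : V} (h : s(x,y) ∈ T.edgeSet) :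
    ¬(T.deleteEdges {s(x,y)}).Reachable x y := by
  have hb := isAcyclic_iff_forall_edge_isBridge.mp hT h
  exact isBridge_iff.mp hb

/-- an edge of a path in a tree disconnects the endpoints of the path. -/
lemma path_edge_disconnects {T : SimpleGraph V} (hT : T.IsTree) {x y : V}
    {p : T.Walk x y} (hp : p.IsPath) {f : Sym2 V} (hf : f ∈ p.edges) :
    ¬(T.deleteEdges {f}).Reachable x y := by
  rintro ⟨q⟩
  have hq' : ∀ e ∈ (q.toPath : (T.deleteEdges {f}).Walk x y).edges, e ∈ T.edgeSet := by
    intro e he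
    have := (q.toPath : (T.deleteEdges {f}).Walk x y).edges_subset_edgeSet he
    rw [edgeSet_deleteEdges] at this
    exact this.1
  set r := ((q.toPath : (T.deleteEdges {f}).Walk x y)).transfer T hq' with hr
  have hrp : r.IsPath := SimpleGraph.Walk.IsPath.transfer _ q.toPath.2
  have heq : r = p := (hT.existsUnique_path x y).unique hrp hp
  have : f ∈ r.edges := heq ▸ hf
  rw [hr, SimpleGraph.Walk.edges_transfer] at this
  have := (q.toPath : (T.deleteEdges {f}).Walk x y).edges_subset_edgeSet this
  rw [edgeSet_deleteEdges] at this
  exact this.2 rfl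

set_option maxHeartbeats 1000000 in
/-- The swap lemma: delete an edge `e` of a tree and add an edge between two vertices
separated by the deletion; the result is again a tree, with a computable edge finset. -/
lemma swap_tree {T : SimpleGraph V} (hT : T.IsTree) {e : Sym2 V} (he : e ∈ T.edgeSet)
    {x y : V} (hxy : x ≠ y) (hreach : ¬(T.deleteEdges {e}).Reachable x y) :
    (T.deleteEdges {e} ⊔ fromEdgeSet {s(x,y)}).IsTree ∧
      EF (T.deleteEdges {e} ⊔ fromEdgeSet {s(x,y)}) = insert s(x,y) ((EF T).erase e) := by
  induction e using Sym2.ind with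
  | _ a b =>
  set H := T.deleteEdges {s(a,b)} with hH
  set H' := H ⊔ fromEdgeSet {s(x,y)} with hH'
  have hHle : H ≤ T := deleteEdges_le _
  -- every vertex reaches a or b in H
  have hstep : ∀ u : V, H.Reachable u a ∨ H.Reachable u b := by
    intro u
    obtain ⟨p⟩ := hT.isConnected.preconnected u a
    rcases reach_of_walk (a := a) (b := b) p with h1 | ⟨h1, h2⟩ | ⟨h1, h2⟩
    · exact Or.inl h1
    · exact Or.inl h1
    · exact Or.inr h1
  have hadjxy : H'.Adj x y := by
    rw [hH', sup_adj, fromEdgeSet_adj]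
    exact Or.inr ⟨rfl, hxy⟩
  -- connectivity
  have hconn : H'.Connected := by
    have hallx : ∀ u : V, H'.Reachable u x := by
      rcases hstep x with hx | hx
      · have hy : H.Reachable y b := by
          rcases hstep y with hy | hy
          · exact absurd (hx.trans hy.symm) hreach
          · exact hy
        intro u
        rcases hstep u with hu | hu
        · exact (hu.trans hx.symm).mono le_sup_left
        · exact ((hu.trans hy.symm).mono le_sup_left).trans hadjxy.symm.reachable
      · have hy : H.Reachable y a := by
          rcases hstep y with hy | hy
          · exact hy
          · exact absurd (hx.trans hy.symm) hreach
        intro u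
        rcases hstep u with hu | hu
        · exact ((hu.trans hy.symm).mono le_sup_left).trans hadjxy.symm.reachable
        · exact (hu.trans hx.symm).mono le_sup_left
    have : Nonempty V := ⟨x⟩
    exact Connected.mk (fun u v => (hallx u).trans (hallx v).symm)
  -- acyclicity
  have hacyc : H'.IsAcyclic := by
    intro v c hc
    by_cases hmem : s(x,y) ∈ c.edges
    · have h2 := (adj_and_reachable_delete_edges_iff_exists_cycle.mpr ⟨v, c, hc, hmem⟩).2
      apply hreach
      refine h2.mono ?_
      calc H' \ fromEdgeSet {s(x,y)} = H \ fromEdgeSet {s(x,y)} := sup_sdiff_right_self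
        _ ≤ H := sdiff_le
    · have hsub : ∀ e' ∈ c.edges, e' ∈ T.edgeSet := by
        intro e' h'
        have h2 := c.edges_subset_edgeSet h'
        rw [hH', edgeSet_sup, hH, edgeSet_deleteEdges, edgeSet_fromEdgeSet] at h2
        rcases h2 with h2 | h2
        · exact h2.1
        · exact absurd (h2.1 ▸ h') hmem
      exact hT.IsAcyclic _ (hc.transfer hsub)
  refine ⟨⟨hconn, hacyc⟩, ?_⟩
  ext e'
  simp only [mem_EF, hH', edgeSet_sup, hH, edgeSet_deleteEdges, edgeSet_fromEdgeSet,
    Set.mem_union, Set.mem_diff, Set.mem_singleton_iff, Set.mem_setOf_eq,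
    Finset.mem_insert, Finset.mem_erase, mem_EF]
  constructor
  · rintro (⟨h1, h2⟩ | ⟨h1, _⟩)
    · exact Or.inr ⟨h2, h1⟩
    · exact Or.inl h1
  · rintro (rfl | ⟨h1, h2⟩)
    · exact Or.inr ⟨rfl, by simp [Sym2.mk_isDiag_iff, hxy]⟩
    · exact Or.inl ⟨h2, h1⟩

/-- weight computation for the swapped tree. -/
lemma swap_weight (w : Sym2 V → ℝ) {T T' : SimpleGraph V} {e : Sym2 V} {x y : V}
    (he : e ∈ T.edgeSet) (hxyT : s(x,y) ∉ T.edgeSet ∨ s(x,y) = e)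
    (hEF : EF T' = insert s(x,y) ((EF T).erase e)) :
    totalWeight w T' = totalWeight w T - w e + w s(x,y) := by
  have hnot : s(x,y) ∉ (EF T).erase e := by
    intro h
    rcases hxyT with h' | h'
    · exact h' (mem_EF.mp (Finset.mem_of_mem_erase h))
    · exact (Finset.ne_of_mem_erase h) h'
  rw [totalWeight, totalWeight_eq, totalWeight, totalWeight_eq, hEF,
    Finset.sum_insert hnot, Finset.sum_erase_eq_sub (mem_EF.mpr he)]
  ring

/-- a walk from a `P`-vertex to a non-`P` vertex crosses the boundary. -/
lemma exists_cross {G : SimpleGraph V} (P : V → Prop) :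
    ∀ {u v : V} (p : G.Walk u v), P u → ¬P v →
      ∃ a b, s(a,b) ∈ p.edges ∧ P a ∧ ¬P b := by
  intro u v p
  induction p with
  | nil => intro h1 h2; exact absurd h1 h2
  | @cons u u' v h q ih =>
    intro h1 h2
    by_cases hP : P u'
    · obtain ⟨a, b, hab, ha, hb⟩ := ih hP h2
      exact ⟨a, b, by rw [SimpleGraph.Walk.edges_cons]; exact List.mem_cons_of_mem _ hab, ha, hb⟩
    · exact ⟨u, u', by rw [SimpleGraph.Walk.edges_cons]; exact List.mem_cons_self, h1, hP⟩


end Helpers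

/-- a spanning tree `T` is an MST of `w` iff `w ≥ alpha T w` pointwise. -/
theorem mst_iff_ge_alpha (w : Sym2 V → ℝ) (hw : IsWeight w)
    (T : SimpleGraph V) (hT : T.IsTree) :
    IsMST w T ↔ ∀ x y : V, alpha T hT w x y ≤ w s(x, y) := by
  constructor
  · rintro ⟨-, hmin⟩ x y
    set p := (hT.existsUnique_path x y).exists.choose with hpdef
    have hp : p.IsPath := (hT.existsUnique_path x y).exists.choose_spec
    show pathMax w p ≤ w s(x, y)
    rw [pathMax]
    apply foldr_max_le (hw.1 _)
    intro r hr
    obtain ⟨f, hf, rfl⟩ := List.mem_map.mp hr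
    by_cases hfe : f = s(x, y)
    · exact le_of_eq (congrArg w hfe)
    · have hxy : x ≠ y := by
        rintro rfl
        rw [SimpleGraph.Walk.isPath_iff_eq_nil.mp hp] at hf
        simp at hf
      have hreach := path_edge_disconnects hT hp hf
      have hfT : f ∈ T.edgeSet := p.edges_subset_edgeSet hf
      obtain ⟨hT', hEF⟩ := swap_tree hT hfT hxy hreach
      have hxyT : s(x, y) ∉ T.edgeSet ∨ s(x, y) = f := by
        by_cases hmem : s(x, y) ∈ T.edgeSet
        · exfalso
          apply hreach
          apply SimpleGraph.Adj.reachable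
          rw [deleteEdges_adj]
          refine ⟨(mem_edgeSet _).mp hmem, ?_⟩
          simp only [Set.mem_singleton_iff]
          exact fun h => hfe h.symm
        · exact Or.inl hmem
      have hwt := swap_weight w hfT hxyT hEF
      have hle := hmin _ hT'
      rw [hwt] at hle
      linarith
  · intro halpha
    refine ⟨hT, ?_⟩
    have key : ∀ n : ℕ, ∀ T' : SimpleGraph V, T'.IsTree →
        (EF T' \ EF T).card = n → totalWeight w T ≤ totalWeight w T' := by
      intro n
      induction n using Nat.strong_induction_on with
      | _ n ih =>
        intro T' hT' hcard
        rcases Finset.eq_empty_or_nonempty (EF T' \ EF T) with hemp | ⟨e', he'⟩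
        · have hsub : EF T' ⊆ EF T := by rwa [Finset.sdiff_eq_empty_iff_subset] at hemp
          haveI i1 : Fintype T.edgeSet := (Set.toFinite _).fintype
          haveI i2 : Fintype T'.edgeSet := (Set.toFinite _).fintype
          have h1 : T.edgeFinset = EF T := by ext e; simp [mem_edgeFinset]
          have h2 : T'.edgeFinset = EF T' := by ext e; simp [mem_edgeFinset]
          have hc1 := hT.card_edgeFinset
          have hc2 := hT'.card_edgeFinset
          rw [h1] at hc1
          rw [h2] at hc2
          have heq : EF T' = EF T :=
            Finset.eq_of_subset_of_card_le hsub (by omega)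
          apply le_of_eq
          rw [totalWeight, totalWeight, totalWeight_eq, totalWeight_eq, heq]
        · rw [Finset.mem_sdiff, mem_EF, mem_EF] at he'
          obtain ⟨heT', heT⟩ := he'
          revert heT' heT
          induction e' using Sym2.ind with
          | _ x y =>
          intro heT' heT
          have hxy : x ≠ y := ((mem_edgeSet _).mp heT').ne
          have hbridge := tree_bridge hT'.IsAcyclic heT'
          set p := (hT.existsUnique_path x y).exists.choose with hpdef
          have hp : p.IsPath := (hT.existsUnique_path x y).exists.choose_spec
          obtain ⟨a, b, hab, hPa, hPb⟩ :=
            exists_cross (fun v => (T'.deleteEdges {s(x, y)}).Reachable x v) p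
              (SimpleGraph.Reachable.refl x) hbridge
          have habT : s(a, b) ∈ T.edgeSet := p.edges_subset_edgeSet hab
          have habne : a ≠ b := ((mem_edgeSet _).mp habT).ne
          have hreach_ab : ¬(T'.deleteEdges {s(x, y)}).Reachable a b :=
            fun h => hPb (hPa.trans h)
          obtain ⟨hT'', hEF⟩ := swap_tree hT' heT' habne hreach_ab
          set T'' := T'.deleteEdges {s(x, y)} ⊔ fromEdgeSet {s(a, b)} with hT''def
          have habT' : s(a, b) ∉ T'.edgeSet := by
            intro hmem
            apply hPb
            refine hPa.trans (SimpleGraph.Adj.reachable ?_)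
            rw [deleteEdges_adj]
            refine ⟨(mem_edgeSet _).mp hmem, ?_⟩
            simp only [Set.mem_singleton_iff]
            intro hcontra
            exact heT (hcontra ▸ habT)
          have hwt := swap_weight w heT' (Or.inl habT') hEF
          have hle1 : w s(a, b) ≤ w s(x, y) := by
            refine le_trans ?_ (halpha x y)
            show w s(a, b) ≤ pathMax w p
            exact le_foldr_max (List.mem_map_of_mem (f := w) hab)
          have hsub2 : EF T'' \ EF T ⊆ (EF T' \ EF T).erase s(x, y) := by
            intro g hg
            rw [Finset.mem_sdiff] at hg
            obtain ⟨hg1, hg2⟩ := hg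
            rw [hEF, Finset.mem_insert] at hg1
            rcases hg1 with rfl | hg1
            · exact absurd (mem_EF.mpr habT) hg2
            · rw [Finset.mem_erase] at hg1
              exact Finset.mem_erase.mpr ⟨hg1.1, Finset.mem_sdiff.mpr ⟨hg1.2, hg2⟩⟩
          have hmemsd : s(x, y) ∈ EF T' \ EF T :=
            Finset.mem_sdiff.mpr ⟨mem_EF.mpr heT', fun h => heT (mem_EF.mp h)⟩
          have hcardlt : (EF T'' \ EF T).card < n := by
            have hpos : 0 < n := hcard ▸ Finset.card_pos.mpr ⟨_, hmemsd⟩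
            have h1 : ((EF T' \ EF T).erase s(x, y)).card < n := by
              rw [Finset.card_erase_of_mem hmemsd, hcard]
              omega
            exact lt_of_le_of_lt (Finset.card_le_card hsub2) h1
          have hIH := ih _ hcardlt _ hT'' rfl
          have hfin : totalWeight w T'' ≤ totalWeight w T' := by rw [hwt]; linarith
          linarith
    intro T' hT'
    exact key _ T' hT' rfl
end

section
/- Let O be a finite set and let β : [0,∞) → Partitions(O) be a dendrogram, i.e.: (1) there is r₀ with β(r) = {O} for all r ≥ r₀; (2) r₁ ≤ r₂ implies β(r₁) refines β(r₂); (3) for each r there is ε > 0 with β(t) = β(r) for all t ∈ [r, r+ε]. Then u(x,y) := inf { r > 0 : x and y lie in the same cluster of β(r) } defines an ultra-metric on O. -/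
open SimpleGraph Finset

variable {V : Type*} [Fintype V] [DecidableEq V]

/-- a dendrogram gives rise to an ultra-metric via
`u(x,y) = inf {r > 0 : x ∼ y in β(r)}`. -/
theorem dendrogram_to_ultrametric (β : ℝ → Setoid V)
    (h1 : ∃ r₀ : ℝ, 0 ≤ r₀ ∧ ∀ r, r₀ ≤ r → β r = ⊤)
    (h2 : ∀ r₁ r₂ : ℝ, 0 ≤ r₁ → r₁ ≤ r₂ → β r₁ ≤ β r₂)
    (h3 : ∀ r : ℝ, 0 ≤ r → ∃ ε > (0 : ℝ), ∀ t, r ≤ t → t ≤ r + ε → β t = β r) :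
    IsUltrametricFn (fun x y : V => sInf {r : ℝ | 0 < r ∧ (β r).r x y}) := by
  obtain ⟨r₀, hr₀, htop⟩ := h1
  set S := fun x y : V => {r : ℝ | 0 < r ∧ (β r).r x y} with hS
  have hne : ∀ x y, (S x y).Nonempty := by
    intro x y
    refine ⟨r₀ + 1, by linarith, ?_⟩
    rw [htop (r₀ + 1) (by linarith)]
    trivial
  have hbdd : ∀ x y, BddBelow (S x y) := by
    intro x y
    exact ⟨0, fun r hr => le_of_lt hr.1⟩
  have hnonneg : ∀ x y : V, 0 ≤ sInf (S x y) := fun x y =>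
    le_csInf (hne x y) (fun r hr => le_of_lt hr.1)
  have key : ∀ (x y : V) (r : ℝ), sInf (S x y) < r → (β r).r x y := by
    intro x y r hr
    obtain ⟨s, hs, hsr⟩ := exists_lt_of_csInf_lt (hne x y) hr
    exact h2 s r (le_of_lt hs.1) (le_of_lt hsr) hs.2
  refine ⟨hnonneg, ?_, ?_, ?_⟩
  · intro x
    have : S x x = Set.Ioi 0 := by
      ext r
      simp only [hS, Set.mem_setOf_eq, Set.mem_Ioi, and_iff_left_iff_imp]
      exact fun _ => (β r).iseqv.refl x
    show sInf (S x x) = 0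
    rw [this, csInf_Ioi]
  · intro x y
    show sInf (S x y) = sInf (S y x)
    apply congrArg sInf
    ext r
    exact and_congr_right (fun _ => ⟨fun h => (β r).iseqv.symm h, fun h => (β r).iseqv.symm h⟩)
  · intro x y z
    by_contra hcon
    push_neg at hcon
    set M := max (sInf (S x y)) (sInf (S y z)) with hM
    have hM0 : 0 ≤ M := le_trans (hnonneg x y) (le_max_left _ _)
    have : ∀ r, M < r → r ∈ S x z := by
      intro r hr
      refine ⟨lt_of_le_of_lt hM0 hr, ?_⟩
      exact (β r).iseqv.trans (key x y r (lt_of_le_of_lt (le_max_left _ _) hr))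
        (key y z r (lt_of_le_of_lt (le_max_right _ _) hr))
    have : sInf (S x z) ≤ M := by
      refine le_of_forall_pos_le_add fun ε hε => ?_
      exact csInf_le (hbdd x z) (this (M + ε) (by linarith))
    exact absurd hcon (not_lt.mpr this)
end
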